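/- arXiv:2310.17123 — 2 statements merged into one kernel-verified Lean document; each statement's English description precedes it below -/
import Mathlib

section
/- Let Ē ~ Exp(a_1+...+a_M) and Z = (Z_1,...,Z_M) ~ Be-Exp_M(a_1,...,a_M) be independent. Then the vector (Ē + Z_1, ..., Ē + Z_M) has the same distribution as a vector of independent exponential random variables with rates a_1,...,a_M respectively. -/
open MeasureTheory ProbabilityTheory Real Filter
open Set Topology
open scoped ENNReal NNReal

noncomputable def bernMeasure {M : ℕ} (p : Fin M → ℝ) : Measure (Fin M) :=
  ∑ i, ENNReal.ofReal (p i) • Measure.dirac i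

/-- The generalized Bernoulli--Exponential distribution `Be-Exp_M(a)`: the law of
`((1-B_1)E_1,…,(1-B_M)E_M)` with `B ~ Be_M(a_i/∑a_j)` independent of independent
`E_i ~ Exp(a_i)`; coordinate `i` is zeroed out with probability `a_i/∑ a_j`. -/
noncomputable def beExpMeasure {M : ℕ} (a : Fin M → ℝ) : Measure (Fin M → ℝ) :=
  Measure.map (fun q : Fin M × (Fin M → ℝ) => fun j => if j = q.1 then 0 else q.2 j)
    ((bernMeasure (fun i => a i / ∑ j, a j)).prod (Measure.pi fun i => expMeasure (a i)))

lemma expMeasure_eq_withDensity (r : ℝ) :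
    expMeasure r = MeasureTheory.volume.withDensity (exponentialPDF r) := rfl

lemma expMeasure_Ioi {r : ℝ} (hr : 0 < r) (t : ℝ) :
    expMeasure r (Ioi t) = ENNReal.ofReal (rexp (-(r * max t 0))) := by
  have hprob := isProbabilityMeasure_expMeasure hr
  have hIic : expMeasure r (Iic t)
      = ENNReal.ofReal (if 0 ≤ t then 1 - rexp (-(r * t)) else 0) := by
    rw [expMeasure_eq_withDensity, withDensity_apply _ measurableSet_Iic,
      lintegral_exponentialPDF_eq_antiDeriv hr]
  have hcompl : expMeasure r (Ioi t) = 1 - expMeasure r (Iic t) := by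
    rw [← Set.compl_Iic, measure_compl measurableSet_Iic (measure_ne_top _ _), measure_univ]
  rw [hcompl, hIic]
  split_ifs with h
  · rw [max_eq_left h]
    have h1 : rexp (-(r * t)) ≤ 1 := by
      rw [Real.exp_le_one_iff]
      exact neg_nonpos_of_nonneg (mul_nonneg hr.le h)
    have h2 : (1 : ℝ≥0∞) = ENNReal.ofReal 1 := by simp
    rw [h2, ← ENNReal.ofReal_sub _ (by linarith [Real.exp_pos (-(r * t))])]
    norm_num
  · simp [max_eq_right (le_of_not_ge h)]

lemma lintegral_bernMeasure {M : ℕ} (p : Fin M → ℝ) (f : Fin M → ℝ≥0∞) :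
    ∫⁻ i, f i ∂(bernMeasure p) = ∑ i, ENNReal.ofReal (p i) * f i := by
  rw [bernMeasure, lintegral_finset_sum_measure]
  simp [lintegral_smul_measure, lintegral_dirac]

noncomputable def spanIoi (mu : MeasureTheory.Measure ℝ) [IsFiniteMeasure mu] :
    mu.FiniteSpanningSetsIn (Set.range Set.Ioi) where
  set n := Set.Ioi (-(n : ℝ))
  set_mem n := ⟨_, rfl⟩
  finite n := measure_lt_top mu _
  spanning := by
    ext x
    simp only [Set.mem_iUnion, Set.mem_Ioi, Set.mem_univ, iff_true]
    obtain ⟨n, hn⟩ := exists_nat_gt (-x)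
    exact ⟨n, by linarith⟩

lemma ennreal_ofReal_prod_of_nonneg {ι : Type*} (s : Finset ι) (f : ι → ℝ)
    (hf : ∀ i ∈ s, 0 ≤ f i) :
    ENNReal.ofReal (∏ i ∈ s, f i) = ∏ i ∈ s, ENNReal.ofReal (f i) := by
  induction s using Finset.cons_induction with
  | empty => simp
  | cons i s hi ih =>
    rw [Finset.prod_cons, Finset.prod_cons,
      ENNReal.ofReal_mul (hf i (Finset.mem_cons_self i s)),
      ih fun j hj => hf j (Finset.mem_cons_of_mem hj)]

lemma hasDerivWithinAt_max_const (c x : ℝ) :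
    HasDerivWithinAt (fun e => max c e) (if c ≤ x then 1 else 0) (Ici x) x := by
  rcases le_or_gt c x with h | h
  · rw [if_pos h]
    exact (hasDerivWithinAt_id x (Ici x)).congr
      (fun e he => max_eq_right (h.trans he)) (max_eq_right h)
  · rw [if_neg (not_le.mpr h)]
    refine (hasDerivWithinAt_const x (Ici x) c).congr_of_eventuallyEq ?_ (max_eq_left h.le)
    filter_upwards [mem_nhdsWithin_of_mem_nhds (Iio_mem_nhds h)] with e he
    exact max_eq_left he.le

section Core
variable {M : ℕ}

lemma core_integrableOn (a t : Fin M → ℝ) (ha : ∀ i, 0 < a i) (hM : M ≠ 0) :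
    IntegrableOn
      (fun e => (∑ i, if t i < e then a i else 0) * rexp (-(∑ j, a j * max (t j) e)))
      (Ioi (0:ℝ)) := by
  have hne : Nonempty (Fin M) := Fin.pos_iff_nonempty.mp (Nat.pos_of_ne_zero hM)
  have hs : 0 < ∑ j, a j := Finset.sum_pos (fun i _ => ha i) Finset.univ_nonempty
  set s : ℝ := ∑ j, a j
  have hψmeas : Measurable fun e : ℝ => ∑ i, if t i < e then a i else 0 := by
    apply Finset.measurable_sum
    intro i _
    exact Measurable.ite measurableSet_Ioi measurable_const measurable_const
  have hφcont : Continuous fun e : ℝ => ∑ j, a j * max (t j) e :=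
    continuous_finset_sum _ fun i _ => continuous_const.mul (continuous_const.max continuous_id)
  have hHcont : Continuous fun e : ℝ => rexp (-(∑ j, a j * max (t j) e)) :=
    Real.continuous_exp.comp hφcont.neg
  refine Integrable.mono' ((exp_neg_integrableOn_Ioi 0 hs).const_mul s)
    (hψmeas.mul hHcont.measurable).aestronglyMeasurable ?_
  filter_upwards [ae_restrict_mem measurableSet_Ioi] with e _
  have hψ_nonneg : 0 ≤ ∑ i, if t i < e then a i else 0 :=
    Finset.sum_nonneg fun i _ => by split <;> simp [(ha i).le]
  have hψ_le : (∑ i, if t i < e then a i else 0) ≤ s :=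
    Finset.sum_le_sum fun i _ => by split <;> simp [(ha i).le]
  have hφ_ge : s * e ≤ ∑ j, a j * max (t j) e := by
    rw [Finset.sum_mul]
    exact Finset.sum_le_sum fun i _ =>
      mul_le_mul_of_nonneg_left (le_max_right _ _) (ha i).le
  have hH_le : rexp (-(∑ j, a j * max (t j) e)) ≤ rexp (-(s * e)) :=
    Real.exp_le_exp.mpr (neg_le_neg hφ_ge)
  rw [Real.norm_eq_abs, abs_of_nonneg (mul_nonneg hψ_nonneg (Real.exp_pos _).le)]
  calc (∑ i, if t i < e then a i else 0) * rexp (-(∑ j, a j * max (t j) e))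
      ≤ s * rexp (-(∑ j, a j * max (t j) e)) :=
        mul_le_mul_of_nonneg_right hψ_le (Real.exp_pos _).le
    _ ≤ s * rexp (-s * e) := by
        rw [neg_mul]; exact mul_le_mul_of_nonneg_left hH_le hs.le

lemma core_integral (a t : Fin M → ℝ) (ha : ∀ i, 0 < a i) (hM : M ≠ 0) :
    ∫ e in Ioi (0:ℝ), ((∑ i, if t i < e then a i else 0) * rexp (-(∑ j, a j * max (t j) e)))
      = rexp (-(∑ j, a j * max (t j) 0)) := by
  have hne : Nonempty (Fin M) := Fin.pos_iff_nonempty.mp (Nat.pos_of_ne_zero hM)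
  set s : ℝ := ∑ j, a j with hs_def
  have hs : 0 < s := Finset.sum_pos (fun i _ => ha i) Finset.univ_nonempty
  set φ : ℝ → ℝ := fun e => ∑ j, a j * max (t j) e with hφ_def
  set ψ : ℝ → ℝ := fun e => ∑ i, if t i ≤ e then a i else 0 with hψ_def
  set H : ℝ → ℝ := fun e => rexp (-(φ e)) with hH_def
  have hφcont : Continuous φ :=
    continuous_finset_sum _ fun i _ => continuous_const.mul (continuous_const.max continuous_id)
  have hHcont : Continuous H := Real.continuous_exp.comp hφcont.neg
  have hψmeas : Measurable ψ := by
    apply Finset.measurable_sum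
    intro i _
    exact Measurable.ite measurableSet_Ici measurable_const measurable_const
  have hψ_nonneg : ∀ e, 0 ≤ ψ e := fun e =>
    Finset.sum_nonneg fun i _ => by split <;> simp [(ha i).le]
  have hψ_le : ∀ e, ψ e ≤ s := fun e =>
    Finset.sum_le_sum fun i _ => by split <;> simp [(ha i).le]
  have hφ_ge : ∀ e, s * e ≤ φ e := by
    intro e
    rw [hs_def, Finset.sum_mul]
    exact Finset.sum_le_sum fun i _ => by
      exact mul_le_mul_of_nonneg_left (le_max_right _ _) (ha i).le
  have hH_le : ∀ e, H e ≤ rexp (-(s * e)) := fun e =>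
    Real.exp_le_exp.mpr (neg_le_neg (hφ_ge e))
  have hH_pos : ∀ e, 0 < H e := fun e => Real.exp_pos _
  have hHderiv : ∀ x : ℝ, HasDerivWithinAt (fun e => -(H e)) (ψ x * H x) (Ici x) x := by
    intro x
    have hφd : HasDerivWithinAt φ (ψ x) (Ici x) x := by
      have h1 := HasDerivWithinAt.fun_sum
        (fun i (_ : i ∈ Finset.univ) => (hasDerivWithinAt_max_const (t i) x).const_mul (a i))
      exact h1.congr_deriv (by simp [hψ_def, mul_ite])
    have h2 := (hφd.neg.exp).neg
    exact h2.congr_deriv (by simp only [mul_neg, neg_neg]; exact mul_comm _ _)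
  have key : ∀ R : ℝ, 0 ≤ R → ∫ e in (0:ℝ)..R, ψ e * H e = H 0 - H R := by
    intro R hR
    have hint : IntervalIntegrable (fun e => ψ e * H e) volume 0 R := by
      rw [intervalIntegrable_iff, uIoc_of_le hR]
      refine Integrable.mono' (integrable_const s)
        (hψmeas.mul hHcont.measurable).aestronglyMeasurable ?_
      filter_upwards [ae_restrict_mem measurableSet_Ioc] with e he
      rw [Real.norm_eq_abs, abs_of_nonneg (mul_nonneg (hψ_nonneg e) (hH_pos e).le)]
      calc ψ e * H e ≤ s * H e := mul_le_mul_of_nonneg_right (hψ_le e) (hH_pos e).le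
        _ ≤ s * 1 := mul_le_mul_of_nonneg_left (((hH_le e).trans (by
              rw [Real.exp_le_one_iff]
              exact neg_nonpos_of_nonneg (mul_nonneg hs.le he.1.le)))) hs.le
        _ = s := mul_one s
    have h := intervalIntegral.integral_eq_sub_of_hasDeriv_right_of_le hR
      (f := fun e => -(H e)) (f' := fun e => ψ e * H e)
      hHcont.neg.continuousOn
      (fun x _ => (hHderiv x).mono Ioi_subset_Ici_self)
      hint
    rw [h]; ring
  have hint : IntegrableOn (fun e => ψ e * H e) (Ioi (0:ℝ)) := by
    refine Integrable.mono' (((exp_neg_integrableOn_Ioi 0 hs)).const_mul s)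
      (hψmeas.mul hHcont.measurable).aestronglyMeasurable ?_
    filter_upwards [ae_restrict_mem measurableSet_Ioi] with e he
    rw [Real.norm_eq_abs, abs_of_nonneg (mul_nonneg (hψ_nonneg e) (hH_pos e).le)]
    calc ψ e * H e ≤ s * H e := mul_le_mul_of_nonneg_right (hψ_le e) (hH_pos e).le
      _ ≤ s * rexp (-s * e) := by
          rw [neg_mul]
          exact mul_le_mul_of_nonneg_left (hH_le e) hs.le
  have hlim1 : Tendsto (fun R => ∫ e in (0:ℝ)..R, ψ e * H e) atTop
      (𝓝 (∫ e in Ioi (0:ℝ), ψ e * H e)) :=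
    intervalIntegral_tendsto_integral_Ioi 0 hint tendsto_id
  have hHtend : Tendsto H atTop (𝓝 0) := by
    have h1 : Tendsto (fun e : ℝ => -(s * e)) atTop atBot :=
      tendsto_neg_atTop_atBot.comp (Tendsto.const_mul_atTop hs tendsto_id)
    have h2 : Tendsto (fun e : ℝ => rexp (-(s * e))) atTop (𝓝 0) :=
      Real.tendsto_exp_atBot.comp h1
    exact squeeze_zero (fun e => (hH_pos e).le) hH_le h2
  have hlim2 : Tendsto (fun R => ∫ e in (0:ℝ)..R, ψ e * H e) atTop (𝓝 (H 0 - 0)) := by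
    refine Tendsto.congr' ?_ (tendsto_const_nhds.sub hHtend)
    filter_upwards [eventually_ge_atTop (0:ℝ)] with R hR
    exact (key R hR).symm
  have hIoi : ∫ e in Ioi (0:ℝ), ψ e * H e = H 0 := by
    have := tendsto_nhds_unique hlim1 hlim2
    rwa [sub_zero] at this
  have hae : (fun e => (∑ i, if t i < e then a i else 0) * H e)
      =ᵐ[volume.restrict (Ioi (0:ℝ))] fun e => ψ e * H e := by
    refine ae_restrict_of_ae ?_
    have hnull : (volume : Measure ℝ) (⋃ i : Fin M, {t i}) = 0 :=
      measure_iUnion_null fun i => measure_singleton _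
    filter_upwards [measure_eq_zero_iff_ae_notMem.mp hnull] with e he
    have h3 : ∀ i : Fin M, (t i < e) = (t i ≤ e) := by
      intro i
      have h4 : e ≠ t i := fun h => he (mem_iUnion.mpr ⟨i, by simp [h]⟩)
      simp only [eq_iff_iff]
      exact ⟨le_of_lt, fun h => lt_of_le_of_ne h (Ne.symm h4)⟩
    simp only [hψ_def, h3]
  rw [integral_congr_ae hae, hIoi]

end Core

section MainCalc
variable {M : ℕ}

lemma main_calc (a : Fin M → ℝ) (ha : ∀ i, 0 < a i) (hM : M ≠ 0) (t : Fin M → ℝ) :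
    Measure.map
      (fun q : ℝ × (Fin M × (Fin M → ℝ)) => fun j => q.1 + if j = q.2.1 then 0 else q.2.2 j)
      ((expMeasure (∑ j, a j)).prod
        ((bernMeasure fun i => a i / ∑ j, a j).prod (Measure.pi fun i => expMeasure (a i))))
      (Set.pi Set.univ fun j => Set.Ioi (t j))
      = ∏ j, expMeasure (a j) (Set.Ioi (t j)) := by
  classical
  have hne : Nonempty (Fin M) := Fin.pos_iff_nonempty.mp (Nat.pos_of_ne_zero hM)
  have hs : 0 < ∑ j, a j := Finset.sum_pos (fun i _ => ha i) Finset.univ_nonempty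
  set s : ℝ := ∑ j, a j with hs_def
  haveI hPi : ∀ i : Fin M, IsProbabilityMeasure (expMeasure (a i)) :=
    fun i => isProbabilityMeasure_expMeasure (ha i)
  haveI := isProbabilityMeasure_expMeasure hs
  haveI : IsProbabilityMeasure (bernMeasure fun i => a i / s) := by
    constructor
    rw [bernMeasure, Measure.finset_sum_apply]
    simp only [Measure.smul_apply, Measure.dirac_apply_of_mem (Set.mem_univ _), smul_eq_mul,
      mul_one]
    rw [← ENNReal.ofReal_sum_of_nonneg fun i _ => div_nonneg (ha i).le hs.le,
      ← Finset.sum_div, div_self hs.ne']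
    simp
  set F := fun q : ℝ × (Fin M × (Fin M → ℝ)) => fun j => q.1 + if j = q.2.1 then 0 else q.2.2 j
    with hF_def
  have hFmeas : Measurable F := by
    apply measurable_pi_lambda
    intro j
    refine measurable_fst.add ?_
    have h1 : Measurable fun q : ℝ × (Fin M × (Fin M → ℝ)) => q.2.1 := measurable_snd.fst
    have h2 : Measurable fun q : ℝ × (Fin M × (Fin M → ℝ)) => q.2.2 j :=
      (measurable_pi_apply j).comp measurable_snd.snd
    have hset : MeasurableSet {q : ℝ × (Fin M × (Fin M → ℝ)) | j = q.2.1} := by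
      have h3 : {q : ℝ × (Fin M × (Fin M → ℝ)) | j = q.2.1}
          = (fun q : ℝ × (Fin M × (Fin M → ℝ)) => q.2.1) ⁻¹' {j} := by
        ext q; simp [eq_comm]
      rw [h3]
      exact h1 (measurableSet_singleton j)
    exact Measurable.ite hset measurable_const h2
  have hSmeas : MeasurableSet (Set.pi Set.univ fun j => Set.Ioi (t j)) :=
    MeasurableSet.univ_pi fun j => measurableSet_Ioi
  rw [Measure.map_apply hFmeas hSmeas, Measure.prod_apply (hFmeas hSmeas)]
  have hslice : ∀ e : ℝ,
      ((bernMeasure fun i => a i / s).prod (Measure.pi fun i => expMeasure (a i)))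
        (Prod.mk e ⁻¹' (F ⁻¹' Set.pi Set.univ fun j => Set.Ioi (t j)))
      = ∑ i, ENNReal.ofReal (a i / s) *
          (if t i < e then
            ∏ j, (if j = i then 1 else expMeasure (a j) (Set.Ioi (t j - e))) else 0) := by
    intro e
    rw [Measure.prod_apply (measurable_prodMk_left (hFmeas hSmeas)), lintegral_bernMeasure]
    refine Finset.sum_congr rfl fun i _ => ?_
    congr 1
    have hsetdesc : (Prod.mk i ⁻¹' (Prod.mk e ⁻¹' (F ⁻¹' Set.pi Set.univ fun j => Set.Ioi (t j))))
        = {x : Fin M → ℝ | ∀ j, t j < e + if j = i then 0 else x j} := by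
      ext x
      simp [hF_def, Set.mem_pi]
    rw [hsetdesc]
    by_cases h : t i < e
    · rw [if_pos h]
      have hset2 : {x : Fin M → ℝ | ∀ j, t j < e + if j = i then 0 else x j}
          = Set.pi Set.univ fun j => if j = i then Set.univ else Set.Ioi (t j - e) := by
        ext x
        simp only [Set.mem_setOf_eq, Set.mem_pi, Set.mem_univ, true_implies]
        refine forall_congr' fun j => ?_
        by_cases hj : j = i
        · simp [hj, h]
        · simp [hj, sub_lt_iff_lt_add']
      rw [hset2, Measure.pi_pi]
      exact Finset.prod_congr rfl fun j _ => by by_cases hj : j = i <;> simp [hj]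
    · rw [if_neg h]
      have hset3 : {x : Fin M → ℝ | ∀ j, t j < e + if j = i then 0 else x j} = (∅ : Set (Fin M → ℝ)) := by
        ext x
        simp only [Set.mem_setOf_eq, Set.mem_empty_iff_false, iff_false, not_forall]
        exact ⟨i, by simpa using h⟩
      rw [hset3, measure_empty]
  rw [lintegral_congr hslice]
  set w : Fin M → ℝ → ℝ := fun i e =>
    if t i < e then (a i / s) * rexp (-(∑ j, if j = i then 0 else a j * max (t j - e) 0)) else 0
    with hw_def
  have hinner : ∀ e : ℝ, (∑ i, ENNReal.ofReal (a i / s) *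
      (if t i < e then
        ∏ j, (if j = i then 1 else expMeasure (a j) (Set.Ioi (t j - e))) else 0))
      = ∑ i, ENNReal.ofReal (w i e) := by
    intro e
    refine Finset.sum_congr rfl fun i _ => ?_
    by_cases h : t i < e
    · simp only [hw_def, if_pos h]
      rw [ENNReal.ofReal_mul (div_nonneg (ha i).le hs.le)]
      congr 1
      have h5 : ∀ j : Fin M, (if j = i then (1:ℝ≥0∞) else expMeasure (a j) (Set.Ioi (t j - e)))
          = ENNReal.ofReal (rexp (-(if j = i then 0 else a j * max (t j - e) 0))) := by
        intro j
        by_cases hj : j = i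
        · simp [hj]
        · simp only [if_neg hj]
          rw [expMeasure_Ioi (ha j)]
      rw [Finset.prod_congr rfl fun j _ => h5 j,
        ← ennreal_ofReal_prod_of_nonneg _ _ fun j _ => (Real.exp_pos _).le]
      congr 1
      rw [← Real.exp_sum]
      congr 1
      rw [← Finset.sum_neg_distrib]
    · simp [hw_def, h]
  have hpdfmeas : Measurable (exponentialPDF s) :=
    (measurable_exponentialPDFReal s).ennreal_ofReal
  rw [lintegral_congr hinner, expMeasure_eq_withDensity,
    lintegral_withDensity_eq_lintegral_mul _ hpdfmeas ?hg]
  case hg =>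
    apply Finset.measurable_sum
    intro i _
    apply ENNReal.measurable_ofReal.comp
    refine Measurable.ite measurableSet_Ioi ?_ measurable_const
    apply Measurable.const_mul
    apply (Real.continuous_exp.comp ?_).measurable
    apply Continuous.neg
    apply continuous_finset_sum
    intro j _
    by_cases hj : j = i
    · simp only [hj, if_pos rfl]
      exact continuous_const
    · simp only [if_neg hj]
      exact continuous_const.mul ((continuous_const.sub continuous_id).max continuous_const)
  -- pointwise identity
  have hpoint : ∀ e : ℝ,
      ((fun e => exponentialPDF s e) * fun e => ∑ i, ENNReal.ofReal (w i e)) e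
      = ENNReal.ofReal (Set.indicator (Set.Ici (0:ℝ))
          (fun e => (∑ i, if t i < e then a i else 0) * rexp (-(∑ j, a j * max (t j) e))) e) := by
    intro e
    simp only [Pi.mul_apply]
    rcases lt_or_ge e 0 with he | he
    · rw [exponentialPDF_of_neg he, zero_mul,
        Set.indicator_of_notMem (by simpa using he), ENNReal.ofReal_zero]
    · rw [exponentialPDF_of_nonneg he, Set.indicator_of_mem (Set.mem_Ici.mpr he),
        ← ENNReal.ofReal_sum_of_nonneg (fun i _ => by
          by_cases h' : t i < e
          · simp only [hw_def, if_pos h']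
            exact mul_nonneg (div_nonneg (ha i).le hs.le) (Real.exp_pos _).le
          · simp [hw_def, h']),
        ← ENNReal.ofReal_mul (by positivity)]
      congr 1
      have hterm : ∀ i : Fin M, (s * rexp (-(s * e))) * w i e
          = (if t i < e then a i else 0) * rexp (-(∑ j, a j * max (t j) e)) := by
        intro i
        by_cases h : t i < e
        · simp only [hw_def, if_pos h]
          have hexp : rexp (-(s * e)) *
              rexp (-(∑ j, if j = i then 0 else a j * max (t j - e) 0))
              = rexp (-(∑ j, a j * max (t j) e)) := by
            rw [← Real.exp_add]
            congr 1
            rw [hs_def, Finset.sum_mul, ← neg_add, ← Finset.sum_add_distrib]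
            refine congrArg Neg.neg (Finset.sum_congr rfl fun j _ => ?_)
            by_cases hj : j = i
            · subst hj
              rw [if_pos rfl, add_zero, max_eq_right h.le]
            · rw [if_neg hj, ← mul_add]
              congr 1
              have h6 : max (t j - e) 0 = max (t j) e - e := by
                rw [← sub_self e, max_sub_sub_right]
              rw [h6]; ring
          have hns : s ≠ 0 := hs.ne'
          calc s * rexp (-(s * e)) *
                ((a i / s) * rexp (-(∑ j, if j = i then 0 else a j * max (t j - e) 0)))
              = a i * (rexp (-(s * e)) *
                  rexp (-(∑ j, if j = i then 0 else a j * max (t j - e) 0))) := by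
                field_simp
            _ = a i * rexp (-(∑ j, a j * max (t j) e)) := by rw [hexp]
        · simp [hw_def, h]
      calc (s * rexp (-(s * e))) * ∑ i, w i e
          = ∑ i, (s * rexp (-(s * e))) * w i e := Finset.mul_sum _ _ _
        _ = ∑ i, (if t i < e then a i else 0) * rexp (-(∑ j, a j * max (t j) e)) :=
            Finset.sum_congr rfl fun i _ => hterm i
        _ = (∑ i, if t i < e then a i else 0) * rexp (-(∑ j, a j * max (t j) e)) :=
            (Finset.sum_mul _ _ _).symm
  rw [lintegral_congr hpoint]
  -- convert to Bochner integral
  have hGint : Integrable (Set.indicator (Set.Ici (0:ℝ))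
      (fun e => (∑ i, if t i < e then a i else 0) * rexp (-(∑ j, a j * max (t j) e)))) volume := by
    rw [integrable_indicator_iff measurableSet_Ici]
    exact (integrableOn_Ici_iff_integrableOn_Ioi).mpr (core_integrableOn a t ha hM)
  have hGnn : 0 ≤ᵐ[volume] Set.indicator (Set.Ici (0:ℝ))
      (fun e => (∑ i, if t i < e then a i else 0) * rexp (-(∑ j, a j * max (t j) e))) := by
    refine Filter.Eventually.of_forall fun e => Set.indicator_nonneg (fun x _ => ?_) e
    exact mul_nonneg (Finset.sum_nonneg fun i _ => by split <;> simp [(ha i).le])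
      (Real.exp_pos _).le
  rw [← MeasureTheory.ofReal_integral_eq_lintegral_ofReal hGint hGnn,
    integral_indicator measurableSet_Ici, integral_Ici_eq_integral_Ioi,
    core_integral a t ha hM]
  have h7 : ∀ j : Fin M, expMeasure (a j) (Set.Ioi (t j))
      = ENNReal.ofReal (rexp (-(a j * max (t j) 0))) := fun j => expMeasure_Ioi (ha j) (t j)
  rw [Finset.prod_congr rfl fun j _ => h7 j,
    ← ennreal_ofReal_prod_of_nonneg _ _ fun j _ => (Real.exp_pos _).le,
    ← Real.exp_sum]
  congr 2
  rw [Finset.sum_neg_distrib]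

end MainCalc

theorem exp_plus_bernoulliExponential_eq_indep_exponentials
    {Ω : Type*} [MeasurableSpace Ω] (P : Measure Ω) [IsProbabilityMeasure P]
    {M : ℕ} (hM : 2 ≤ M) (a : Fin M → ℝ) (ha : ∀ i, 0 < a i)
    (Ebar : Ω → ℝ) (Z : Ω → Fin M → ℝ)
    (hmeas1 : Measurable Ebar) (hmeas2 : Measurable Z)
    (hindep : IndepFun Ebar Z P)
    (hEbar : Measure.map Ebar P = expMeasure (∑ j, a j))
    (hZ : Measure.map Z P = beExpMeasure a) :
    Measure.map (fun ω i => Ebar ω + Z ω i) P = Measure.pi fun i => expMeasure (a i) := by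
  classical
  have hM0 : M ≠ 0 := by omega
  have hne : Nonempty (Fin M) := Fin.pos_iff_nonempty.mp (Nat.pos_of_ne_zero hM0)
  have hs : 0 < ∑ j, a j := Finset.sum_pos (fun i _ => ha i) Finset.univ_nonempty
  haveI hPi : ∀ i : Fin M, IsProbabilityMeasure (expMeasure (a i)) :=
    fun i => isProbabilityMeasure_expMeasure (ha i)
  haveI := isProbabilityMeasure_expMeasure hs
  haveI : IsProbabilityMeasure (bernMeasure fun i => a i / ∑ j, a j) := by
    constructor
    rw [bernMeasure, Measure.finset_sum_apply]
    simp only [Measure.smul_apply, Measure.dirac_apply_of_mem (Set.mem_univ _), smul_eq_mul,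
      mul_one]
    rw [← ENNReal.ofReal_sum_of_nonneg fun i _ => div_nonneg (ha i).le hs.le,
      ← Finset.sum_div, div_self hs.ne']
    simp
  have hg : Measurable
      (fun q : Fin M × (Fin M → ℝ) => fun j => if j = q.1 then 0 else q.2 j) := by
    apply measurable_pi_lambda
    intro j
    have h2 : Measurable fun q : Fin M × (Fin M → ℝ) => q.2 j :=
      (measurable_pi_apply j).comp measurable_snd
    have hset : MeasurableSet {q : Fin M × (Fin M → ℝ) | j = q.1} := by
      have h3 : {q : Fin M × (Fin M → ℝ) | j = q.1} = Prod.fst ⁻¹' {j} := by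
        ext q; simp [eq_comm]
      rw [h3]
      exact measurable_fst (measurableSet_singleton j)
    exact Measurable.ite hset measurable_const h2
  have hadd : Measurable (fun p : ℝ × (Fin M → ℝ) => fun i => p.1 + p.2 i) :=
    measurable_pi_lambda _ fun i =>
      measurable_fst.add ((measurable_pi_apply i).comp measurable_snd)
  have hjoint : Measure.map (fun ω => (Ebar ω, Z ω)) P
      = (expMeasure (∑ j, a j)).prod (beExpMeasure a) := by
    rw [← hEbar, ← hZ]
    exact (indepFun_iff_map_prod_eq_prod_map_map
      hmeas1.aemeasurable hmeas2.aemeasurable).mp hindep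
  have hcomp : (fun ω i => Ebar ω + Z ω i)
      = (fun p : ℝ × (Fin M → ℝ) => fun i => p.1 + p.2 i) ∘ (fun ω => (Ebar ω, Z ω)) := rfl
  rw [hcomp, ← Measure.map_map hadd (hmeas1.prodMk hmeas2), hjoint, beExpMeasure]
  have hprodmap : (expMeasure (∑ j, a j)).prod
        (Measure.map (fun q : Fin M × (Fin M → ℝ) => fun j => if j = q.1 then 0 else q.2 j)
          ((bernMeasure fun i => a i / ∑ j, a j).prod (Measure.pi fun i => expMeasure (a i))))
      = Measure.map
          (Prod.map id (fun q : Fin M × (Fin M → ℝ) => fun j => if j = q.1 then 0 else q.2 j))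
          ((expMeasure (∑ j, a j)).prod
            ((bernMeasure fun i => a i / ∑ j, a j).prod (Measure.pi fun i => expMeasure (a i)))) := by
    rw [← Measure.map_prod_map _ _ measurable_id hg, Measure.map_id]
  rw [hprodmap, Measure.map_map hadd (measurable_id.prodMap hg)]
  have hFeq : (fun p : ℝ × (Fin M → ℝ) => fun i => p.1 + p.2 i) ∘
      (Prod.map id (fun q : Fin M × (Fin M → ℝ) => fun j => if j = q.1 then 0 else q.2 j))
      = fun q : ℝ × (Fin M × (Fin M → ℝ)) => fun j => q.1 + if j = q.2.1 then 0 else q.2.2 j :=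
    rfl
  rw [hFeq]
  refine (Measure.pi_eq_generateFrom (C := fun _ => Set.range Set.Ioi)
    (fun i => (BorelSpace.measurable_eq.trans (borel_eq_generateFrom_Ioi ℝ)).symm)
    (fun i => isPiSystem_Ioi)
    (fun i => spanIoi _) ?_).symm
  intro f hf
  choose t ht using hf
  have hfe : f = fun i => Set.Ioi (t i) := funext fun i => (ht i).symm
  rw [hfe]
  exact main_calc a ha hM0 t
end

section
/- Let X ~ Be-Exp_M(a_1,...,a_M). Then for any x = (x_1,...,x_M) with nonnegative entries, the CDF of X satisfies F_X(x) = p_M · F_{(E_1,...,E_{M-1})}(x_1,...,x_{M-1}) + (1 - p_M) · F_Z(x_1,...,x_{M-1}) · (1 - e^{-a_M x_M}), where p_M = a_M/(a_1+...+a_M), (E_1,...,E_{M-1}) are independent exponentials with rates a_1,...,a_{M-1}, and Z ~ Be-Exp_{M-1}(a_1,...,a_{M-1}). -/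
open MeasureTheory ProbabilityTheory Real Filter

/-- The Dirichlet distribution `D_M(a)`: the law of `(W_1/S,…,W_M/S)` for independent
`W_i ~ Gamma(a_i,1)` and `S = ∑ W_j`. -/
noncomputable def dirichletMeasure {M : ℕ} (a : Fin M → ℝ) : Measure (Fin M → ℝ) :=
  Measure.map (fun w i => w i / ∑ j, w j) (Measure.pi fun i => gammaMeasure (a i) 1)

open scoped ENNReal

section Aux
open Set

lemma expMeasure_Iic {r x : ℝ} (hr : 0 < r) (hx : 0 ≤ x) :
    expMeasure r (Set.Iic x) = ENNReal.ofReal (1 - Real.exp (-(r * x))) := by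
  rw [expMeasure, gammaMeasure, withDensity_apply _ measurableSet_Iic]
  have h : gammaPDF 1 r = exponentialPDF r := rfl
  rw [h, lintegral_exponentialPDF_eq_antiDeriv hr, if_pos hx]

lemma beExp_cdf {M : ℕ} (a : Fin M → ℝ) (ha : ∀ i, 0 < a i)
    (x : Fin M → ℝ) (hx : ∀ i, 0 ≤ x i) :
    beExpMeasure a {f | ∀ i, f i ≤ x i} =
      ∑ i, ENNReal.ofReal (a i / ∑ j, a j) *
        ∏ j, (if j = i then 1 else ENNReal.ofReal (1 - Real.exp (-(a j) * x j))) := by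
  have hφ : Measurable (fun q : Fin M × (Fin M → ℝ) => fun j => if j = q.1 then 0 else q.2 j) := by
    refine measurable_pi_lambda _ fun j => ?_
    have hset : MeasurableSet {q : Fin M × (Fin M → ℝ) | j = q.1} := by
      have h1 : MeasurableSet ((Prod.fst : Fin M × (Fin M → ℝ) → Fin M) ⁻¹' {j}) :=
        measurable_fst (MeasurableSet.singleton j)
      convert h1 using 1
      ext q; simp [eq_comm]
    exact Measurable.ite hset measurable_const ((measurable_pi_apply j).comp measurable_snd)
  have hSeq : {f : Fin M → ℝ | ∀ i, f i ≤ x i} = Set.pi Set.univ fun i => Set.Iic (x i) := by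
    ext f; simp [Set.mem_pi, Set.mem_Iic, Pi.le_def]
  have hS : MeasurableSet {f : Fin M → ℝ | ∀ i, f i ≤ x i} := by
    rw [hSeq]; exact MeasurableSet.univ_pi fun i => measurableSet_Iic
  haveI : ∀ i, IsProbabilityMeasure (expMeasure (a i)) :=
    fun i => isProbabilityMeasure_expMeasure (ha i)
  rw [beExpMeasure, Measure.map_apply hφ hS, Measure.prod_apply (hφ hS), bernMeasure,
    lintegral_finset_sum_measure]
  simp only [lintegral_smul_measure, lintegral_dirac, smul_eq_mul]
  refine Finset.sum_congr rfl fun i _ => ?_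
  congr 1
  have hset : (Prod.mk i ⁻¹' ((fun q : Fin M × (Fin M → ℝ) => fun j => if j = q.1 then 0 else q.2 j)
      ⁻¹' {f | ∀ i, f i ≤ x i})) =
      Set.pi Set.univ fun j => if j = i then Set.univ else Set.Iic (x j) := by
    ext e
    simp only [Set.mem_preimage, Set.mem_setOf_eq, Set.mem_pi, Set.mem_univ, true_implies]
    constructor
    · intro h j
      by_cases hj : j = i
      · simp [hj]
      · simpa [hj] using h j
    · intro h j
      by_cases hj : j = i
      · subst hj; simpa using hx j
      · simpa [hj] using h j
  rw [hset, Measure.pi_pi]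
  refine Finset.prod_congr rfl fun j _ => ?_
  by_cases hj : j = i
  · simp [hj]
  · rw [if_neg hj, if_neg hj, expMeasure_Iic (ha j) (hx j), neg_mul]

lemma piExp_cdf {M : ℕ} (b : Fin M → ℝ) (hb : ∀ i, 0 < b i)
    (y : Fin M → ℝ) (hy : ∀ i, 0 ≤ y i) :
    (Measure.pi fun i => expMeasure (b i)) {g | ∀ i, g i ≤ y i} =
      ∏ i, ENNReal.ofReal (1 - Real.exp (-(b i) * y i)) := by
  have hSeq : {g : Fin M → ℝ | ∀ i, g i ≤ y i} = Set.pi Set.univ fun i => Set.Iic (y i) := by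
    ext g; simp [Set.mem_pi, Set.mem_Iic, Pi.le_def]
  haveI : ∀ i, IsProbabilityMeasure (expMeasure (b i)) :=
    fun i => isProbabilityMeasure_expMeasure (hb i)
  rw [hSeq, Measure.pi_pi]
  exact Finset.prod_congr rfl fun i _ => by rw [expMeasure_Iic (hb i) (hy i), neg_mul]

end Aux

theorem bernoulliExponential_cdf_decomposition
    {M : ℕ} (hM : 1 ≤ M) (a : Fin (M + 1) → ℝ) (ha : ∀ i, 0 < a i)
    (x : Fin (M + 1) → ℝ) (hx : ∀ i, 0 ≤ x i) :
    beExpMeasure a {f | ∀ i, f i ≤ x i} =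
      ENNReal.ofReal (a (Fin.last M) / ∑ j, a j) *
          (Measure.pi fun i : Fin M => expMeasure (a i.castSucc))
            {g | ∀ i : Fin M, g i ≤ x i.castSucc} +
        ENNReal.ofReal (1 - a (Fin.last M) / ∑ j, a j) *
          beExpMeasure (fun i : Fin M => a i.castSucc) {g | ∀ i : Fin M, g i ≤ x i.castSucc} *
          ENNReal.ofReal (1 - Real.exp (-(a (Fin.last M)) * x (Fin.last M))) := by
  haveI : Nonempty (Fin M) := Fin.pos_iff_nonempty.mp hM
  set g : Fin (M + 1) → ℝ≥0∞ := fun j => ENNReal.ofReal (1 - Real.exp (-(a j) * x j)) with hg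
  have hS : 0 < ∑ j, a j := Finset.sum_pos (fun j _ => ha j) Finset.univ_nonempty
  have hS' : 0 < ∑ j : Fin M, a j.castSucc :=
    Finset.sum_pos (fun j _ => ha _) Finset.univ_nonempty
  have hsum : (∑ j, a j) = (∑ j : Fin M, a j.castSucc) + a (Fin.last M) :=
    Fin.sum_univ_castSucc a
  have h1 : (1 : ℝ) - a (Fin.last M) / ∑ j, a j = (∑ j : Fin M, a j.castSucc) / ∑ j, a j := by
    rw [eq_div_iff hS.ne', sub_mul, one_mul, div_mul_cancel₀ _ hS.ne']
    linarith
  have hP : ∀ i : Fin M, ENNReal.ofReal (a i.castSucc / ∑ j, a j) =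
      ENNReal.ofReal ((∑ j : Fin M, a j.castSucc) / ∑ j, a j) *
        ENNReal.ofReal (a i.castSucc / ∑ j : Fin M, a j.castSucc) := by
    intro i
    rw [← ENNReal.ofReal_mul (by positivity)]
    congr 1
    field_simp
  have hlast : ∏ j : Fin (M + 1), (if j = Fin.last M then 1 else g j) =
      ∏ j : Fin M, g j.castSucc := by
    rw [Fin.prod_univ_castSucc]
    simp [(Fin.castSucc_lt_last _).ne]
  have hmid : ∀ i : Fin M, ∏ j : Fin (M + 1), (if j = i.castSucc then 1 else g j) =
      (∏ j : Fin M, if j = i then 1 else g j.castSucc) * g (Fin.last M) := by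
    intro i
    rw [Fin.prod_univ_castSucc]
    congr 1
    · exact Finset.prod_congr rfl fun j _ => by simp [Fin.castSucc_inj]
    · rw [if_neg (Fin.castSucc_lt_last i).ne']
  rw [beExp_cdf a ha x hx, beExp_cdf _ (fun i => ha _) _ (fun i => hx _),
    piExp_cdf _ (fun i => ha _) _ (fun i => hx _)]
  rw [Fin.sum_univ_castSucc]
  rw [hlast]
  simp only [hg] at hmid ⊢
  simp_rw [hmid, hP]
  rw [h1, add_comm]
  congr 1
  rw [Finset.mul_sum, Finset.sum_mul]
  exact Finset.sum_congr rfl fun i _ => by ring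
end
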